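/- Let k ∈ 4ℕ, n ∈ (k/2)ℕ \ kℕ, and V = A ∪ B a partition such that ⌊n/k⌋ − |A| is odd. Let B'_{n,k}(A,B) be the k-graph whose edges are all k-subsets intersecting A in an odd number of vertices, together with all k-subsets of A containing a fixed vertex v ∈ A. Then B'_{n,k}(A,B) contains no Hamilton (k/2)-cycle. -/
import Mathlib


def HamHalfCycle (n k : ℕ) (E : Finset (Fin n) → Prop) : Prop :=
  ∃ (t : ℕ) (L : ℕ → Finset (Fin n)), t = 2 * n / k ∧ 0 < t ∧
    (∀ i, L (i + t) = L i) ∧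
    (∀ i, (L i).card = k / 2) ∧
    (∀ i < t, ∀ j < t, i ≠ j → Disjoint (L i) (L j)) ∧
    (Finset.range t).biUnion L = Finset.univ ∧
    (∀ i, E (L i ∪ L (i + 1)))

/-- For k ∈ 4ℕ, n ∈ (k/2)ℕ \ kℕ, ⌊n/k⌋ − |A| odd, the k-graph B' consisting of all
k-sets odd w.r.t. A together with all k-subsets of A containing a fixed v ∈ A has
no Hamilton (k/2)-cycle. -/
theorem Bprime_no_ham_half_cycle (k n : ℕ) (hk4 : 4 ∣ k) (hkpos : 0 < k)
    (hn : k / 2 ∣ n) (hnk : ¬ k ∣ n)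
    (A : Finset (Fin n)) (v : Fin n) (hv : v ∈ A)
    (hodd : Odd ((n / k : ℤ) - (A.card : ℤ))) :
    ¬ HamHalfCycle n k
      (fun e => e.card = k ∧ (Odd ((e ∩ A).card) ∨ (e ⊆ A ∧ v ∈ e))) := by
  rintro ⟨t, L, ht, htpos, hper, hcard, hdisj, hcover, hE⟩
  obtain ⟨a, rfl⟩ := hk4
  have ha : 0 < a := by omega
  have hk2 : 4 * a / 2 = 2 * a := by omega
  obtain ⟨m, hm⟩ := hn
  rw [hk2] at hm
  -- t = m
  have htm : t = m := by
    rw [ht, hm, show 2 * (2 * a * m) = m * (4 * a) by ring]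
    exact Nat.mul_div_cancel m (by omega)
  -- m is odd
  have hmodd : Odd m := by
    rcases Nat.even_or_odd m with he | ho
    · obtain ⟨w, hw⟩ := he
      exact absurd ⟨w, by rw [hm, hw]; ring⟩ hnk
    · exact ho
  obtain ⟨u, hu⟩ := hmodd
  have htu : t = 2 * u + 1 := by omega
  -- t ≥ 2
  have ht2 : 2 ≤ t := by
    by_contra h
    have ht1 : t = 1 := by omega
    have h0 := (hE 0).1
    have hL1 : L (0 + 1) = L 0 := by
      have := hper 0; rw [ht1] at this; exact this
    rw [hL1, Finset.union_self] at h0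
    have hc0 := hcard 0
    omega
  have h20 : (2 : ZMod 2) = 0 := rfl
  -- periodicity mod t
  have Lmod : ∀ i, L i = L (i % t) := by
    intro i
    induction i using Nat.strong_induction_on with
    | _ i ih =>
      rcases Nat.lt_or_ge i t with h | h
      · rw [Nat.mod_eq_of_lt h]
      · have e1 : L i = L (i - t) := by
          conv_lhs => rw [show i = (i - t) + t by omega]
          exact hper (i - t)
        rw [e1, ih (i - t) (by omega), Nat.mod_eq_sub_mod h]
  set b : ℕ → ZMod 2 := fun i => ((L i ∩ A).card : ZMod 2) with hbdef'
  have hbdef : ∀ i, b i = ((L i ∩ A).card : ZMod 2) := fun _ => rfl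
  have bmod : ∀ i, b i = b (i % t) := by
    intro i; rw [hbdef i, hbdef (i % t), Lmod i]
  have bper : ∀ i, b (i + t) = b i := by
    intro i; rw [hbdef (i + t), hbdef i, hper i]
  have hmodlt : ∀ i, i % t < t := fun i => Nat.mod_lt _ (by omega)
  have hsuccmod : ∀ i, (i + 1) % t = (i % t + 1) % t := by
    intro i
    conv_lhs => rw [Nat.add_mod]
    rw [Nat.mod_eq_of_lt (show (1:ℕ) < t by omega)]
  have bsucc : ∀ i, b (i + 1) = b (i % t + 1) := by
    intro i
    rw [bmod (i + 1), bmod (i % t + 1), hsuccmod i]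
  have hdisj' : ∀ i, Disjoint (L i) (L (i + 1)) := by
    intro i
    rw [Lmod i, Lmod (i + 1), hsuccmod i]
    rcases Nat.lt_or_ge (i % t + 1) t with h | h
    · rw [Nat.mod_eq_of_lt h]
      exact hdisj _ (hmodlt i) _ h (by omega)
    · have h1 : i % t = t - 1 := by have := hmodlt i; omega
      have h2 : (i % t + 1) % t = 0 := by
        rw [h1, show t - 1 + 1 = t by omega]; exact Nat.mod_self t
      rw [h2]
      exact hdisj _ (hmodlt i) 0 (by omega) (by omega)
  have hinter : ∀ i, ((L i ∪ L (i + 1)) ∩ A).card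
      = (L i ∩ A).card + (L (i + 1) ∩ A).card := by
    intro i
    rw [Finset.union_inter_distrib_right]
    exact Finset.card_union_of_disjoint
      ((hdisj' i).mono Finset.inter_subset_left Finset.inter_subset_left)
  -- the unique piece containing v
  obtain ⟨j, hj, hvj⟩ : ∃ j ∈ Finset.range t, v ∈ L j := by
    apply Finset.mem_biUnion.mp
    rw [hcover]; exact Finset.mem_univ v
  have hjt : j < t := Finset.mem_range.mp hj
  have huniq : ∀ i, i < t → v ∈ L i → i = j := by
    intro i hit hvi
    by_contra hne
    exact (Finset.disjoint_left.mp (hdisj i hit j hjt hne)) hvi hvj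
  -- classification of edges
  have hzmod1 : ∀ x y : ZMod 2, x + y = 1 → y = x + 1 := by decide
  have hclass : ∀ i, b (i + 1) = b i + 1 ∨
      (b i = 0 ∧ b (i + 1) = 0 ∧ (i % t = j ∨ (i + 1) % t = j)) := by
    intro i
    obtain ⟨hcardE, hor⟩ := hE i
    rcases hor with hodd' | ⟨hsub, hvmem⟩
    · left
      rw [hinter i] at hodd'
      obtain ⟨c, hc⟩ := hodd'
      apply hzmod1
      rw [hbdef i, hbdef (i + 1), ← Nat.cast_add, hc]
      push_cast
      rw [h20]; ring
    · right
      have hsubi : L i ⊆ A := (Finset.union_subset_iff.mp hsub).1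
      have hsubi1 : L (i + 1) ⊆ A := (Finset.union_subset_iff.mp hsub).2
      have hbi : b i = 0 := by
        rw [hbdef i, Finset.inter_eq_left.mpr hsubi, hcard i, hk2]
        push_cast; rw [h20]; ring
      have hbi1 : b (i + 1) = 0 := by
        rw [hbdef (i + 1), Finset.inter_eq_left.mpr hsubi1, hcard (i + 1), hk2]
        push_cast; rw [h20]; ring
      refine ⟨hbi, hbi1, ?_⟩
      rcases Finset.mem_union.mp hvmem with hvi | hvi
      · left
        rw [Lmod i] at hvi
        exact huniq _ (hmodlt i) hvi
      · right
        rw [Lmod (i + 1)] at hvi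
        exact huniq _ (hmodlt (i + 1)) hvi
  -- the set of "even" edges
  set S : Finset ℕ :=
    (Finset.range t).filter (fun i => ¬ (b (i + 1) = b i + 1)) with hSdef
  have hSsub : S ⊆ {j, if j = 0 then t - 1 else j - 1} := by
    intro i hi
    simp only [hSdef, Finset.mem_filter, Finset.mem_range] at hi
    obtain ⟨hit, hnq⟩ := hi
    rcases hclass i with h | ⟨_, _, hjj⟩
    · exact absurd h hnq
    simp only [Finset.mem_insert, Finset.mem_singleton]
    rcases hjj with h | h
    · rw [Nat.mod_eq_of_lt hit] at h
      left; omega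
    · rcases Nat.lt_or_ge (i + 1) t with hlt | hge
      · rw [Nat.mod_eq_of_lt hlt] at h
        right; split <;> omega
      · have hit' : i + 1 = t := by omega
        rw [hit', Nat.mod_self] at h
        right; split <;> omega
  have hcardS2 : S.card ≤ 2 := by
    refine le_trans (Finset.card_le_card hSsub) ?_
    refine le_trans (Finset.card_insert_le _ _) ?_
    simp
  -- shifted sums
  have hshiftsum : ∀ f : ℕ → ZMod 2, f t = f 0 →
      ∑ i ∈ Finset.range t, f (i + 1) = ∑ i ∈ Finset.range t, f i := by
    intro f hf
    have h1 := Finset.sum_range_succ f t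
    have h2 := Finset.sum_range_succ' f t
    have h3 : (∑ i ∈ Finset.range t, f (i + 1)) + f 0
        = (∑ i ∈ Finset.range t, f i) + f 0 := by
      rw [← h2, h1, hf]
    exact add_right_cancel h3
  -- the telescoping parity count
  have hzero : ∀ x : ZMod 2, x + x = 0 := by decide
  have hzmod2 : ∀ x y : ZMod 2, y = x + 1 → x + y = 1 := by decide
  have hsplit := Finset.sum_filter_add_sum_filter_not (Finset.range t)
    (fun i => ¬ (b (i + 1) = b i + 1)) (fun i => b i + b (i + 1))
  have hS0 : ∑ i ∈ S, (b i + b (i + 1)) = 0 := by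
    apply Finset.sum_eq_zero
    intro i hi
    simp only [hSdef, Finset.mem_filter, Finset.mem_range] at hi
    rcases hclass i with h | ⟨h1, h2, _⟩
    · exact absurd h hi.2
    · rw [h1, h2, add_zero]
  have hS1 : ∑ i ∈ (Finset.range t).filter (fun i => ¬¬ (b (i + 1) = b i + 1)),
      (b i + b (i + 1)) = (((Finset.range t).filter
        (fun i => ¬¬ (b (i + 1) = b i + 1))).card : ZMod 2) := by
    rw [Finset.sum_congr rfl (fun i hi => ?_), Finset.sum_const, nsmul_eq_mul,
      mul_one]
    exact hzmod2 _ _ (not_not.mp (Finset.mem_filter.mp hi).2)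
  have htot : ∑ i ∈ Finset.range t, (b i + b (i + 1)) = 0 := by
    rw [Finset.sum_add_distrib]
    rw [hshiftsum b (by have := bper 0; simpa using this)]
    exact hzero _
  have hcastcard : ((((Finset.range t).filter
      (fun i => ¬¬ (b (i + 1) = b i + 1))).card : ZMod 2)) = 0 := by
    rw [← hS1]
    have := hsplit
    rw [htot, hS0] at this
    -- this : Σ_{filter ¬¬} + 0 = 0  (S is filter of ¬)
    simpa [hSdef] using this
  have hdvd : 2 ∣ ((Finset.range t).filter
      (fun i => ¬¬ (b (i + 1) = b i + 1))).card :=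
    (ZMod.natCast_eq_zero_iff _ 2).mp hcastcard
  have hfiltercard : ((Finset.range t).filter
        (fun i => ¬¬ (b (i + 1) = b i + 1))).card + S.card = t := by
    rw [hSdef]
    have := Finset.card_filter_add_card_filter_not
      (s := Finset.range t) (p := fun i => ¬ (b (i + 1) = b i + 1))
    simp only [Finset.card_range] at this
    omega
  have hcardS1 : S.card = 1 := by
    obtain ⟨w, hw⟩ := hdvd
    omega
  obtain ⟨p, hpS⟩ := Finset.card_eq_one.mp hcardS1
  have hpmem : p ∈ S := by rw [hpS]; exact Finset.mem_singleton_self p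
  have hpt : p < t := by
    have := Finset.mem_filter.mp (by rwa [hSdef] at hpmem)
    exact Finset.mem_range.mp this.1
  have hnQp : ¬ (b (p + 1) = b p + 1) := by
    have := Finset.mem_filter.mp (by rwa [hSdef] at hpmem)
    exact this.2
  have hbp1 : b (p + 1) = 0 := by
    rcases hclass p with h | ⟨_, h2, _⟩
    · exact absurd h hnQp
    · exact h2
  have hQ : ∀ i, i < t → i ≠ p → b (i + 1) = b i + 1 := by
    intro i hit hne
    by_contra h
    have : i ∈ S := by
      rw [hSdef]
      exact Finset.mem_filter.mpr ⟨Finset.mem_range.mpr hit, h⟩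
    rw [hpS] at this
    exact hne (Finset.mem_singleton.mp this)
  have hQ' : ∀ i, i % t ≠ p → b (i + 1) = b i + 1 := by
    intro i h
    have h1 := hQ (i % t) (hmodlt i) h
    rw [← bsucc i, ← bmod i] at h1
    exact h1
  -- the chain of bits
  have hchain : ∀ s, s < t → b (p + 1 + s) = (s : ZMod 2) := by
    intro s
    induction s with
    | zero => intro _; simpa using hbp1
    | succ s ih =>
      intro hst
      have h1 : b (p + 1 + s) = (s : ZMod 2) := ih (by omega)
      have h2 : (p + 1 + s) % t ≠ p := by
        rcases Nat.lt_or_ge (p + 1 + s) t with h | h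
        · rw [Nat.mod_eq_of_lt h]; omega
        · have hlt : p + 1 + s - t < t := by omega
          rw [Nat.mod_eq_sub_mod h, Nat.mod_eq_of_lt hlt]; omega
      have h3 := hQ' (p + 1 + s) h2
      rw [show p + 1 + (s + 1) = (p + 1 + s) + 1 by ring, h3, h1]
      push_cast; ring
  -- shifted full-period sums agree
  have hper' : ∀ q, ∑ i ∈ Finset.range t, b (q + i) = ∑ i ∈ Finset.range t, b i := by
    intro q
    induction q with
    | zero => simp
    | succ q ih =>
      have hstep : ∑ i ∈ Finset.range t, b (q + 1 + i)
          = ∑ i ∈ Finset.range t, b (q + i) := by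
        have hf : (fun i => b (q + i)) t = (fun i => b (q + i)) 0 := by
          simp only []
          rw [show q + t = q + t from rfl, bper q, add_zero]
        have := hshiftsum (fun i => b (q + i)) hf
        calc ∑ i ∈ Finset.range t, b (q + 1 + i)
            = ∑ i ∈ Finset.range t, b (q + (i + 1)) := by
              apply Finset.sum_congr rfl
              intro i _
              rw [show q + 1 + i = q + (i + 1) by ring]
          _ = ∑ i ∈ Finset.range t, b (q + i) := this
      rw [hstep, ih]
  have hsum_eq : ∑ i ∈ Finset.range t, b i = ∑ i ∈ Finset.range t, (i : ZMod 2) := by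
    rw [← hper' (p + 1)]
    exact Finset.sum_congr rfl fun i hi => hchain i (Finset.mem_range.mp hi)
  -- the sum equals |A|
  have hbU : ((Finset.range t).biUnion fun i => L i ∩ A) = A := by
    ext x
    simp only [Finset.mem_biUnion, Finset.mem_inter, Finset.mem_range]
    constructor
    · rintro ⟨i, _, _, hx⟩; exact hx
    · intro hx
      have hx2 : x ∈ (Finset.range t).biUnion L := by
        rw [hcover]; exact Finset.mem_univ x
      obtain ⟨i, hi, hxi⟩ := Finset.mem_biUnion.mp hx2
      exact ⟨i, Finset.mem_range.mp hi, hxi, hx⟩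
  have hcardA : ∑ i ∈ Finset.range t, (L i ∩ A).card = A.card := by
    calc ∑ i ∈ Finset.range t, (L i ∩ A).card
        = ((Finset.range t).biUnion fun i => L i ∩ A).card :=
          (Finset.card_biUnion (fun i hi j' hj' hne =>
            (hdisj i (Finset.mem_range.mp hi) j' (Finset.mem_range.mp hj') hne).mono
              Finset.inter_subset_left Finset.inter_subset_left)).symm
      _ = A.card := by rw [hbU]
  have hAsum : ∑ i ∈ Finset.range t, b i = (A.card : ZMod 2) := by
    rw [← hcardA, Nat.cast_sum]
  -- Gauss sum
  have hgauss : ∑ i ∈ Finset.range t, (i : ZMod 2) = (u : ZMod 2) := by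
    have h2 := Finset.sum_range_id_mul_two t
    have e : t * (t - 1) = (2 * (u * u) + u) * 2 := by
      rw [htu, show 2 * u + 1 - 1 = 2 * u by omega]; ring
    have h3 : (∑ i ∈ Finset.range t, i) = 2 * (u * u) + u :=
      Nat.eq_of_mul_eq_mul_right (show 0 < 2 by norm_num) (h2.trans e)
    calc ∑ i ∈ Finset.range t, (i : ZMod 2)
        = ((∑ i ∈ Finset.range t, i : ℕ) : ZMod 2) := by rw [Nat.cast_sum]
      _ = ((2 * (u * u) + u : ℕ) : ZMod 2) := by rw [h3]
      _ = (u : ZMod 2) := by push_cast; rw [h20]; ring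
  have hfin : (A.card : ZMod 2) = (u : ZMod 2) := by
    rw [← hAsum, hsum_eq, hgauss]
  -- compute n / k
  have hdiv : n / (4 * a) = u := by
    rw [hm, hu, show 2 * a * (2 * u + 1) = 2 * a + 4 * a * u by ring,
      Nat.add_mul_div_left _ _ (show 0 < 4 * a by omega),
      Nat.div_eq_of_lt (by omega)]
    omega
  -- final contradiction
  obtain ⟨c, hc⟩ := hodd
  rw [← Int.natCast_div, hdiv] at hc
  have hfin2 := congrArg (fun z : ℤ => (z : ZMod 2)) hc
  push_cast at hfin2
  rw [hfin, sub_self] at hfin2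
  rw [h20] at hfin2
  simp at hfin2
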